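/- Let m ≥ 6 and let a₁, …, aₙ be positive integers such that every integer N with 0 ≤ N ≤ m-4 can be written as N = a₁P_m(x₁) + ⋯ + aₙP_m(xₙ) for some integers x₁, …, xₙ ∈ ℤ. Then 2ⁿ ≥ m - 3. -/
import Mathlib


/-- The generalized `m`-gonal number at `x`. -/
def polygonal (m x : ℤ) : ℤ := ((m - 2) * x ^ 2 - (m - 4) * x) / 2

lemma polygonal_two_mul (m x : ℤ) : 2 * polygonal m x = (m - 2) * x ^ 2 - (m - 4) * x := by
  have h2 : 2 ∣ (m - 2) * x ^ 2 - (m - 4) * x := by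
    have hx : 2 ∣ x ^ 2 - x := by
      rcases Int.even_or_odd x with ⟨k, hk⟩ | ⟨k, hk⟩
      · exact ⟨2 * k ^ 2 - k, by subst hk; ring⟩
      · exact ⟨2 * k ^ 2 + k, by subst hk; ring⟩
    obtain ⟨k, hk⟩ := hx
    exact ⟨(m - 2) * k + x, by linear_combination (m - 2) * hk⟩
  rw [polygonal, Int.mul_ediv_cancel' h2]

lemma polygonal_nonneg (m x : ℤ) (hm : 6 ≤ m) : 0 ≤ polygonal m x := by
  have h := polygonal_two_mul m x
  have hx2 : x ≤ x ^ 2 := by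
    rcases le_or_gt x 0 with h0 | h0
    · nlinarith [sq_nonneg x]
    · nlinarith
  nlinarith [sq_nonneg x]

lemma polygonal_small (m x : ℤ) (hm : 6 ≤ m) (h : polygonal m x ≤ m - 4) :
    polygonal m x = 0 ∨ polygonal m x = 1 := by
  have h2 := polygonal_two_mul m x
  have hx : x = 0 ∨ x = 1 := by
    by_contra hc
    push_neg at hc
    rcases lt_trichotomy x 0 with h0 | h0 | h0
    · have hx1 : x ≤ -1 := by omega
      nlinarith [sq_nonneg (x + 1)]
    · exact hc.1 h0
    · have hx1 : 2 ≤ x := by omega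
      nlinarith [sq_nonneg (x - 2)]
  rcases hx with rfl | rfl
  · left; omega
  · right; nlinarith

theorem stmt_7 (m : ℤ) (hm : 6 ≤ m) (n : ℕ) (a : Fin n → ℤ) (ha : ∀ i, 0 < a i)
    (hrep : ∀ N : ℤ, 0 ≤ N → N ≤ m - 4 →
      ∃ x : Fin n → ℤ, ∑ i, a i * polygonal m (x i) = N) :
    m - 3 ≤ 2 ^ n := by
  classical
  have key : ∀ N : ℤ, 0 ≤ N → N ≤ m - 4 → ∃ S : Finset (Fin n), ∑ i ∈ S, a i = N := by
    intro N hN0 hN1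
    obtain ⟨x, hx⟩ := hrep N hN0 hN1
    have hterm : ∀ i, polygonal m (x i) = 0 ∨ polygonal m (x i) = 1 := by
      intro i
      apply polygonal_small m _ hm
      have hle : a i * polygonal m (x i) ≤ N := by
        rw [← hx]
        apply Finset.single_le_sum (f := fun j => a j * polygonal m (x j))
          (fun j _ => mul_nonneg (ha j).le (polygonal_nonneg m _ hm)) (Finset.mem_univ i)
      have hp := polygonal_nonneg m (x i) hm
      have hai := ha i
      nlinarith
    refine ⟨Finset.univ.filter (fun i => polygonal m (x i) = 1), ?_⟩
    rw [Finset.sum_filter, ← hx]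
    apply Finset.sum_congr rfl
    intro i _
    rcases hterm i with h | h <;> simp [h]
  set f : ℤ → Finset (Fin n) := fun N =>
    if h : 0 ≤ N ∧ N ≤ m - 4 then (key N h.1 h.2).choose else ∅ with hf
  have hinj : Set.InjOn f (Finset.Icc 0 (m - 4)) := by
    intro N1 h1 N2 h2 heq
    simp only [Finset.coe_Icc, Set.mem_Icc] at h1 h2
    rw [hf] at heq
    simp only [dif_pos h1, dif_pos h2] at heq
    have s1 := (key N1 h1.1 h1.2).choose_spec
    have s2 := (key N2 h2.1 h2.2).choose_spec
    rw [← s1, ← s2, heq]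
  have hcard := Finset.card_le_card_of_injOn f
    (fun _ _ => Finset.mem_univ _) hinj
  rw [Int.card_Icc, Finset.card_univ, Fintype.card_finset, Fintype.card_fin] at hcard
  have h2n : ((2 ^ n : ℕ) : ℤ) = (2 : ℤ) ^ n := by push_cast; ring
  omega
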